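/- For every ε > 0 and every p ∈ [0,1], one has ω(p,ε) ≤ φ₀(p,ε)·√(ε/2). -/

import Mathlib

open Real

/-- Bernoulli Kullback–Leibler divergence `kl(a‖b)`. -/
noncomputable def klBer (a b : ℝ) : ℝ :=
  a * Real.log (a / b) + (1 - a) * Real.log ((1 - a) / (1 - b))

/-- `ω(p, ε)`. -/
noncomputable def omegaKL (p ε : ℝ) : ℝ :=
  if p = 0 then 0
  else if p ≤ Real.exp (-ε) then
    sInf {η : ℝ | η ∈ Set.Icc 0 (1 - p) ∧ klBer (p + η) p = ε}
  else 1 - p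

/-- `σ(p) = √(p(1-p))`. -/
noncomputable def sigmaB (p : ℝ) : ℝ := Real.sqrt (p * (1 - p))

/-- `ρ_ε = 9/(9+2ε)`. -/
noncomputable def rhoEps (ε : ℝ) : ℝ := 9 / (9 + 2 * ε)

/-- `φ₀(p,ε) = √(4σ(p)²ρ_ε² + σ(ρ_ε)²) + σ(ρ_ε)(1-2p)`. -/
noncomputable def phi0 (p ε : ℝ) : ℝ :=
  Real.sqrt (4 * (sigmaB p) ^ 2 * (rhoEps ε) ^ 2 + (sigmaB (rhoEps ε)) ^ 2)
    + sigmaB (rhoEps ε) * (1 - 2 * p)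


lemma mono_aux {f f' : ℝ → ℝ} {a b : ℝ} (hab : a ≤ b)
    (hd : ∀ x ∈ Set.Icc a b, HasDerivAt f (f' x) x)
    (h0 : ∀ x ∈ Set.Icc a b, 0 ≤ f' x) : f a ≤ f b := by
  have hmono : MonotoneOn f (Set.Icc a b) := by
    apply monotoneOn_of_deriv_nonneg (convex_Icc a b)
    · exact fun x hx => (hd x hx).continuousAt.continuousWithinAt
    · intro x hx
      rw [interior_Icc] at hx
      exact (hd x (Set.Ioo_subset_Icc_self hx)).differentiableAt.differentiableWithinAt
    · intro x hx
      rw [interior_Icc] at hx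
      rw [(hd x (Set.Ioo_subset_Icc_self hx)).deriv]
      exact h0 x (Set.Ioo_subset_Icc_self hx)
  exact hmono (Set.left_mem_Icc.2 hab) (Set.right_mem_Icc.2 hab) hab

lemma tangent_aux {x y : ℝ} (hx0 : 0 < x) (hx1 : x < 1) (hy0 : 0 < y) (hy1 : y < 1) :
    (y*(1-y))⁻¹ + (2*y-1)*((y*(1-y))⁻¹)^2*(x-y) ≤ x⁻¹ + (1-x)⁻¹ := by
  rw [← sub_nonneg]
  have h1x : (0:ℝ) < 1 - x := by linarith
  have h1y : (0:ℝ) < 1 - y := by linarith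
  have h : x⁻¹ + (1-x)⁻¹ - ((y*(1-y))⁻¹ + (2*y-1)*((y*(1-y))⁻¹)^2*(x-y))
      = (x-y)^2*((1-x)*(1-y)^2 + x*y^2)/((x*(1-x))*(y*(1-y))^2) := by
    field_simp; ring
  rw [h]
  apply div_nonneg
  · apply mul_nonneg (sq_nonneg _)
    nlinarith [sq_nonneg (1-y), sq_nonneg y]
  · positivity

section klderiv
variable {p : ℝ}

/-- derivative of `s ↦ klBer (p+s) p`. -/
lemma hasDerivAt_klBer (hp0 : 0 < p) (hp1 : p < 1) {s : ℝ} (hs0 : 0 < p + s) (hs1 : p + s < 1) :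
    HasDerivAt (fun s => klBer (p + s) p)
      (Real.log ((p+s)/p) - Real.log ((1-(p+s))/(1-p))) s := by
  have hps : p + s ≠ 0 := ne_of_gt hs0
  have hps' : (1 : ℝ) - (p + s) ≠ 0 := by linarith
  have hp : p ≠ 0 := ne_of_gt hp0
  have hp' : (1:ℝ) - p ≠ 0 := by linarith
  have hd1 : HasDerivAt (fun s : ℝ => p + s) 1 s := by
    simpa using (hasDerivAt_id s).const_add p
  have hd2 : HasDerivAt (fun s : ℝ => (p + s)/p) (1/p) s := hd1.div_const p
  have hlog1 : HasDerivAt (fun s : ℝ => Real.log ((p+s)/p)) ((p+s)⁻¹) s := by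
    have := hd2.log (by simp [div_ne_zero_iff, hps, hp])
    convert this using 1
    field_simp
  have hd3 : HasDerivAt (fun s : ℝ => (1 - (p + s))/(1-p)) (-(1-p)⁻¹) s := by
    have : HasDerivAt (fun s : ℝ => 1 - (p + s)) (-1) s := by
      simpa using hd1.const_sub 1
    simpa [neg_div, one_div] using this.div_const (1-p)
  have hlog2 : HasDerivAt (fun s : ℝ => Real.log ((1-(p+s))/(1-p))) (-(1-(p+s))⁻¹) s := by
    have := hd3.log (by simp [div_ne_zero_iff, hps', hp'])
    convert this using 1
    field_simp
  have h1 : HasDerivAt (fun s : ℝ => (p+s) * Real.log ((p+s)/p))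
      (Real.log ((p+s)/p) + 1) s := by
    have := hd1.fun_mul hlog1
    refine this.congr_deriv ?_
    field_simp
  have h2 : HasDerivAt (fun s : ℝ => (1-(p+s)) * Real.log ((1-(p+s))/(1-p)))
      (-Real.log ((1-(p+s))/(1-p)) - 1) s := by
    have hd4 : HasDerivAt (fun s : ℝ => 1 - (p + s)) (-1) s := by
      simpa using hd1.const_sub 1
    have := hd4.fun_mul hlog2
    refine this.congr_deriv ?_
    field_simp
    ring
  have hsum := h1.fun_add h2
  have heq : (fun s => klBer (p+s) p)
      = fun s : ℝ => (p+s) * Real.log ((p+s)/p) + (1-(p+s)) * Real.log ((1-(p+s))/(1-p)) := by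
    funext t; simp [klBer]
  rw [heq]
  refine hsum.congr_deriv ?_
  ring

/-- derivative of the derivative. -/
lemma hasDerivAt_klBer' (hp0 : 0 < p) (hp1 : p < 1) {s : ℝ} (hs0 : 0 < p + s) (hs1 : p + s < 1) :
    HasDerivAt (fun s => Real.log ((p+s)/p) - Real.log ((1-(p+s))/(1-p)))
      ((p+s)⁻¹ + (1-(p+s))⁻¹) s := by
  have hps : p + s ≠ 0 := ne_of_gt hs0
  have hps' : (1 : ℝ) - (p + s) ≠ 0 := by linarith
  have hp : p ≠ 0 := ne_of_gt hp0
  have hp' : (1:ℝ) - p ≠ 0 := by linarith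
  have hd1 : HasDerivAt (fun s : ℝ => p + s) 1 s := by
    simpa using (hasDerivAt_id s).const_add p
  have hd2 : HasDerivAt (fun s : ℝ => (p + s)/p) (1/p) s := hd1.div_const p
  have hlog1 : HasDerivAt (fun s : ℝ => Real.log ((p+s)/p)) ((p+s)⁻¹) s := by
    have := hd2.log (by simp [div_ne_zero_iff, hps, hp])
    convert this using 1
    field_simp
  have hd3 : HasDerivAt (fun s : ℝ => (1 - (p + s))/(1-p)) (-(1-p)⁻¹) s := by
    have : HasDerivAt (fun s : ℝ => 1 - (p + s)) (-1) s := by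
      simpa using hd1.const_sub 1
    simpa [neg_div, one_div] using this.div_const (1-p)
  have hlog2 : HasDerivAt (fun s : ℝ => Real.log ((1-(p+s))/(1-p))) (-(1-(p+s))⁻¹) s := by
    have := hd3.log (by simp [div_ne_zero_iff, hps', hp'])
    convert this using 1
    field_simp
  have := hlog1.fun_sub hlog2
  refine this.congr_deriv ?_
  ring

end klderiv

/-- The key "one-third variance" lower bound on the Bernoulli KL divergence. -/
lemma klBer_ge (p η : ℝ) (hp0 : 0 < p) (hη0 : 0 ≤ η) (hη1 : p + η < 1) :
    η^2 * ((p + η/3) * (1 - (p + η/3)))⁻¹ / 2 ≤ klBer (p + η) p := by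
  have hp1 : p < 1 := by linarith
  set m : ℝ := p + η/3 with hm
  have hm0 : 0 < m := by simp only [hm]; linarith
  have hm1 : m < 1 := by simp only [hm]; linarith
  have hV : 0 < m * (1 - m) := mul_pos hm0 (by linarith)
  set w₀ : ℝ := (m * (1-m))⁻¹ with hw₀
  set w₁ : ℝ := (2*m - 1) * w₀^2 with hw₁
  set Q : ℝ → ℝ := fun s => w₀*s^2/2 + w₁*(s^3/6 - (η/3)*s^2/2) with hQ
  set Q₁ : ℝ → ℝ := fun s => w₀*s + w₁*(s^2/2 - (η/3)*s) with hQ₁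
  set Q₂ : ℝ → ℝ := fun s => w₀ + w₁*(s - η/3) with hQ₂
  set F : ℝ → ℝ := fun s => klBer (p + s) p with hF
  set F₁ : ℝ → ℝ := fun s => Real.log ((p+s)/p) - Real.log ((1-(p+s))/(1-p)) with hF₁
  -- derivatives of Q
  have hQd : ∀ s : ℝ, HasDerivAt Q (Q₁ s) s := by
    intro s
    simp only [hQ, hQ₁]
    apply HasDerivAt.add
    · have := ((hasDerivAt_pow 2 s).const_mul w₀).div_const 2
      refine this.congr_deriv ?_; ring
    · apply HasDerivAt.const_mul
      have := ((hasDerivAt_pow 3 s).div_const 6).fun_sub (((hasDerivAt_pow 2 s).const_mul (η/3)).div_const 2)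
      refine this.congr_deriv ?_; ring
  have hQ₁d : ∀ s : ℝ, HasDerivAt Q₁ (Q₂ s) s := by
    intro s
    simp only [hQ₁, hQ₂]
    apply HasDerivAt.add
    · simpa using (hasDerivAt_id s).const_mul w₀
    · apply HasDerivAt.const_mul
      have := ((hasDerivAt_pow 2 s).div_const 2).fun_sub ((hasDerivAt_id s).const_mul (η/3))
      refine this.congr_deriv ?_; ring
  -- bounds inside the interval
  have hrange : ∀ s ∈ Set.Icc (0:ℝ) η, 0 < p + s ∧ p + s < 1 := by
    intro s hs
    constructor <;> [linarith [hs.1]; linarith [hs.2]]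
  -- g₁ := F₁ - Q₁ is nonneg on [0, η]
  have hg₁ : ∀ s ∈ Set.Icc (0:ℝ) η, 0 ≤ F₁ s - Q₁ s := by
    intro s hs
    have key : (fun t => F₁ t - Q₁ t) 0 ≤ (fun t => F₁ t - Q₁ t) s := by
      refine mono_aux (f := fun t => F₁ t - Q₁ t)
        (f' := fun x => ((p+x)⁻¹ + (1-(p+x))⁻¹) - Q₂ x) hs.1 ?_ ?_
      · intro x hx
        have hx' : x ∈ Set.Icc (0:ℝ) η := ⟨hx.1, le_trans hx.2 hs.2⟩
        have h := (hasDerivAt_klBer' hp0 hp1 (hrange x hx').1 (hrange x hx').2).sub (hQ₁d x)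
        exact h
      · intro x hx
        have hx' : x ∈ Set.Icc (0:ℝ) η := ⟨hx.1, le_trans hx.2 hs.2⟩
        have h1 := (hrange x hx').1
        have h2 := (hrange x hx').2
        have := tangent_aux (x := p + x) (y := m) h1 h2 hm0 hm1
        simp only [hQ₂, sub_nonneg]
        calc w₀ + w₁ * (x - η/3) = (m*(1-m))⁻¹ + (2*m-1)*((m*(1-m))⁻¹)^2*((p+x) - m) := by
              simp only [hw₁, hw₀, hm]; ring
        _ ≤ (p+x)⁻¹ + (1-(p+x))⁻¹ := this
    have hF₁0 : F₁ 0 = 0 := by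
      simp only [hF₁, add_zero]
      rw [div_self (ne_of_gt hp0), div_self (by linarith : (1:ℝ)-p ≠ 0)]
      simp
    have hQ₁0 : Q₁ 0 = 0 := by simp [hQ₁]
    simpa [hF₁0, hQ₁0] using key
  -- F - Q is monotone on [0, η], so F η ≥ Q η
  have hFQ : (fun s => F s - Q s) 0 ≤ (fun s => F s - Q s) η := by
    refine mono_aux (f := fun s => F s - Q s) (f' := fun x => F₁ x - Q₁ x) hη0 ?_ ?_
    · intro x hx
      exact (hasDerivAt_klBer hp0 hp1 (hrange x hx).1 (hrange x hx).2).sub (hQd x)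
    · intro x hx
      simpa [sub_nonneg] using hg₁ x hx
  have hF0 : F 0 = 0 := by
    simp only [hF, klBer, add_zero]
    rw [div_self (ne_of_gt hp0), div_self (by linarith : (1:ℝ)-p ≠ 0)]
    simp
  have hQ0 : Q 0 = 0 := by simp [hQ]
  have hQη : Q η = w₀ * η^2 / 2 := by simp only [hQ]; ring
  have : Q η ≤ F η := by simpa [hF0, hQ0] using hFQ
  calc η^2 * ((p + η/3) * (1 - (p + η/3)))⁻¹ / 2 = Q η := by rw [hQη]; simp only [hw₀, hm]; ring
  _ ≤ F η := this
  _ = klBer (p + η) p := rfl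

lemma rho_facts (ε : ℝ) (hε : 0 < ε) :
    0 < rhoEps ε ∧ rhoEps ε < 1 ∧ rhoEps ε * (9 + 2*ε) = 9 := by
  have h9 : (0:ℝ) < 9 + 2*ε := by linarith
  refine ⟨div_pos (by norm_num) h9, ?_, div_mul_cancel₀ 9 (ne_of_gt h9)⟩
  rw [rhoEps, div_lt_one h9]; linarith

lemma sigmaB_sq {p : ℝ} (hp0 : 0 ≤ p) (hp1 : p ≤ 1) : (sigmaB p)^2 = p * (1-p) :=
  Real.sq_sqrt (mul_nonneg hp0 (by linarith))

/-- `√(ε/2) * σ(ρ_ε) = ε ρ_ε / 3`. -/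
lemma sqrt_mul_sigma_rho (ε : ℝ) (hε : 0 < ε) :
    Real.sqrt (ε/2) * sigmaB (rhoEps ε) = ε * rhoEps ε / 3 := by
  obtain ⟨hr0, hr1, hr⟩ := rho_facts ε hε
  rw [sigmaB, ← Real.sqrt_mul (by positivity)]
  have h1 : (1:ℝ) - rhoEps ε = 2*ε*rhoEps ε/9 := by linear_combination -(1/9 : ℝ) * hr
  have : ε/2 * (rhoEps ε * (1 - rhoEps ε)) = (ε * rhoEps ε / 3)^2 := by
    rw [h1]; ring
  rw [this, Real.sqrt_sq (by positivity)]

/-- `0 ≤ φ₀`. -/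
lemma phi0_nonneg (ε p : ℝ) (hp1 : p ≤ 1) : 0 ≤ phi0 p ε := by
  have hD : 0 ≤ sigmaB (rhoEps ε) := Real.sqrt_nonneg _
  have h1 : sigmaB (rhoEps ε) ≤
      Real.sqrt (4 * (sigmaB p) ^ 2 * (rhoEps ε) ^ 2 + (sigmaB (rhoEps ε)) ^ 2) := by
    nth_rewrite 1 [← Real.sqrt_sq hD]
    exact Real.sqrt_le_sqrt (le_add_of_nonneg_left (by positivity))
  rw [phi0]
  nlinarith [mul_le_mul_of_nonneg_left (by linarith : (-1:ℝ) ≤ 1 - 2*p) hD]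

/-- Forward quadratic step: the key inequality implies `η ≤ φ₀ √(ε/2)`. -/
lemma quad_root_le (ε p η : ℝ) (hε : 0 < ε) (hp0 : 0 ≤ p) (hp1 : p ≤ 1) (hη : 0 ≤ η)
    (key : η^2 ≤ 2*ε*((p + η/3) * (1 - (p + η/3)))) :
    η ≤ phi0 p ε * Real.sqrt (ε/2) := by
  obtain ⟨hr0, hr1, hr⟩ := rho_facts ε hε
  set r := rhoEps ε with hrdef
  have hr9 : 9*(1-r) = 2*ε*r := by linear_combination -hr
  have key2 : (9+2*ε)*η^2 ≤ 18*ε*(p*(1-p)) + 6*ε*((1-2*p)*η) := by nlinarith [key]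
  have e1 : r*((9+2*ε)*η^2) = 9*η^2 := by rw [← mul_assoc, hr]
  have key3 : η^2 ≤ 2*ε*r*(p*(1-p)) + (2*ε*r/3)*((1-2*p)*η) := by
    nlinarith [mul_le_mul_of_nonneg_left key2 hr0.le, e1]
  have h4 : 2*ε*r*(p*(1-p)) = 2*ε*r^2*(p*(1-p)) + (4*ε^2*r^2/9)*(p*(1-p)) := by
    linear_combination (2*ε*r*(p*(1-p))/9) * hr9
  have h5 : (ε/2)*(r*(1-r)) = ε^2*r^2/9 := by
    linear_combination (ε*r/18) * hr9
  have hsq : (η - (ε*r/3)*(1-2*p))^2 ≤ (ε/2)*(4*p*(1-p)*r^2 + r*(1-r)) := by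
    nlinarith [key3, h4, h5]
  have hXnn : (0:ℝ) ≤ 4 * (sigmaB p) ^ 2 * r ^ 2 + (sigmaB r) ^ 2 := by positivity
  have hux : (Real.sqrt (4 * (sigmaB p) ^ 2 * r ^ 2 + (sigmaB r) ^ 2) * Real.sqrt (ε/2))^2
      = (ε/2)*(4*p*(1-p)*r^2 + r*(1-r)) := by
    rw [mul_pow, Real.sq_sqrt hXnn, Real.sq_sqrt (by positivity : (0:ℝ) ≤ ε/2),
      sigmaB_sq hp0 hp1, sigmaB_sq hr0.le hr1.le]
    ring
  have hu0 : 0 ≤ Real.sqrt (4 * (sigmaB p) ^ 2 * r ^ 2 + (sigmaB r) ^ 2) * Real.sqrt (ε/2) :=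
    mul_nonneg (Real.sqrt_nonneg _) (Real.sqrt_nonneg _)
  have hphi : phi0 p ε * Real.sqrt (ε/2)
      = Real.sqrt (4 * (sigmaB p) ^ 2 * r ^ 2 + (sigmaB r) ^ 2) * Real.sqrt (ε/2)
        + (ε*r/3)*(1-2*p) := by
    rw [phi0, ← hrdef, add_mul]
    congr 1
    rw [mul_comm (sigmaB r) (1-2*p), mul_assoc, mul_comm (sigmaB r) (Real.sqrt (ε/2)),
      sqrt_mul_sigma_rho ε hε]
    ring
  rw [hphi]
  rcases le_or_gt η ((ε*r/3)*(1-2*p)) with hcase | hcase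
  · linarith [hu0]
  · nlinarith [hsq, hux, hu0, hcase]

/-- Reverse step: `B = φ₀ √(ε/2)` satisfies `2ε·σ(p+B/3)² ≤ B²`. -/
lemma quad_root_ge (ε p : ℝ) (hε : 0 < ε) (hp0 : 0 ≤ p) (hp1 : p ≤ 1) :
    2*ε*((p + (phi0 p ε * Real.sqrt (ε/2))/3) * (1 - (p + (phi0 p ε * Real.sqrt (ε/2))/3)))
      ≤ (phi0 p ε * Real.sqrt (ε/2))^2 := by
  obtain ⟨hr0, hr1, hr⟩ := rho_facts ε hε
  set r := rhoEps ε with hrdef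
  set u := Real.sqrt (4 * (sigmaB p) ^ 2 * r ^ 2 + (sigmaB r) ^ 2) * Real.sqrt (ε/2) with hu
  have hXnn : (0:ℝ) ≤ 4 * (sigmaB p) ^ 2 * r ^ 2 + (sigmaB r) ^ 2 := by positivity
  have hu2 : u^2 = (ε/2)*(4*p*(1-p)*r^2 + r*(1-r)) := by
    rw [hu, mul_pow, Real.sq_sqrt hXnn, Real.sq_sqrt (by positivity : (0:ℝ) ≤ ε/2),
      sigmaB_sq hp0 hp1, sigmaB_sq hr0.le hr1.le]
    ring
  have hphi : phi0 p ε * Real.sqrt (ε/2) = u + (ε*r/3)*(1-2*p) := by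
    rw [phi0, ← hrdef, add_mul, hu]
    congr 1
    rw [mul_comm (sigmaB r) (1-2*p), mul_assoc, mul_comm (sigmaB r) (Real.sqrt (ε/2)),
      sqrt_mul_sigma_rho ε hε]
    ring
  rw [hphi]
  set B := u + (ε*r/3)*(1-2*p) with hB
  have hG : ((9+2*ε)^2) * (18*ε*(p*(1-p)) + 6*ε*((1-2*p)*B) - (9+2*ε)*B^2) = 0 := by
    rw [hB]
    linear_combination (-(9+2*ε)^3) * hu2 +
      ((-162)*ε*p + (162)*ε*p^2 + (-72)*ε^2*p + (72)*ε^2*p^2 + (-8)*ε^3*p + (8)*ε^3*p^2 +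
       ((81:ℝ)/2)*r*ε + (-162)*r*ε*p + (162)*r*ε*p^2 + (9)*r*ε^2 + (-36)*r*ε^2*p +
       (36)*r*ε^2*p^2 + (-2)*r*ε^3 + (8)*r*ε^3*p + (-8)*r*ε^3*p^2 + ((-4:ℝ)/9)*r*ε^4 +
       ((16:ℝ)/9)*r*ε^4*p + ((-16:ℝ)/9)*r*ε^4*p^2 + (-54)*u*ε + (108)*u*ε*p +
       (-24)*u*ε^2 + (48)*u*ε^2*p + ((-8:ℝ)/3)*u*ε^3 + ((16:ℝ)/3)*u*ε^3*p) * hr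
  have h9 : ((9:ℝ)+2*ε)^2 ≠ 0 := by positivity
  have hG0 : 18*ε*(p*(1-p)) + 6*ε*((1-2*p)*B) - (9+2*ε)*B^2 = 0 := by
    rcases mul_eq_zero.mp hG with h | h
    · exact absurd h h9
    · exact h
  apply le_of_eq
  linear_combination ((1:ℝ)/9) * hG0

/-- `(9/4)·(1-p)/(1+2p) ≤ -log p` on `(0,1]`. -/
lemma neg_log_ge (p : ℝ) (hp0 : 0 < p) (hp1 : p ≤ 1) :
    (9/4)*((1-p)*(1+2*p)⁻¹) ≤ -Real.log p := by
  have key : (fun x => Real.log x + (9/4)*((1-x)*(1+2*x)⁻¹)) p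
      ≤ (fun x => Real.log x + (9/4)*((1-x)*(1+2*x)⁻¹)) 1 := by
    refine mono_aux (f := fun x => Real.log x + (9/4)*((1-x)*(1+2*x)⁻¹)) (f' := fun x => x⁻¹ +
      (9/4)*((-1)*(1+2*x)⁻¹ + (1-x)*(-2/(1+2*x)^2))) hp1 ?_ ?_
    · intro x hx
      have hx0 : 0 < x := lt_of_lt_of_le hp0 hx.1
      have h12 : (0:ℝ) < 1 + 2*x := by linarith
      apply HasDerivAt.add
      · exact Real.hasDerivAt_log (ne_of_gt hx0)
      · apply HasDerivAt.const_mul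
        have d1 : HasDerivAt (fun x : ℝ => 1 - x) (-1) x := by
          simpa using (hasDerivAt_id x).const_sub 1
        have d2 : HasDerivAt (fun x : ℝ => (1+2*x)⁻¹) (-2/(1+2*x)^2) x := by
          have db : HasDerivAt (fun x : ℝ => 1+2*x) 2 x := by
            simpa using ((hasDerivAt_id x).const_mul 2).const_add 1
          exact db.inv (ne_of_gt h12)
        exact d1.mul d2
    · intro x hx
      have hx0 : 0 < x := lt_of_lt_of_le hp0 hx.1
      have h12 : (0:ℝ) < 1 + 2*x := by linarith
      have heq : x⁻¹ + (9/4)*((-1)*(1+2*x)⁻¹ + (1-x)*(-2/(1+2*x)^2))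
          = (4*(1+2*x)^2 - 27*x)/(4*x*(1+2*x)^2) := by
        field_simp
        ring
      rw [heq]
      apply div_nonneg _ (by positivity)
      nlinarith [sq_nonneg (32*x - 11)]
  simp only [Real.log_one] at key
  have : (9:ℝ)/4*((1-1)*(1+2*1)⁻¹) = 0 := by norm_num
  simp only [this] at key
  linarith [key]

/-- For every `ε > 0` and `p ∈ [0,1]`, `ω(p,ε) ≤ φ₀(p,ε) √(ε/2)`. -/
theorem omegaKL_le_phi0 (ε : ℝ) (hε : 0 < ε) (p : ℝ) (hp : p ∈ Set.Icc (0 : ℝ) 1) :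
    omegaKL p ε ≤ phi0 p ε * Real.sqrt (ε / 2) := by
  obtain ⟨hp0, hp1⟩ := hp
  have hB0 : 0 ≤ phi0 p ε * Real.sqrt (ε / 2) :=
    mul_nonneg (phi0_nonneg ε p hp1) (Real.sqrt_nonneg _)
  rcases eq_or_lt_of_le hp0 with hp0' | hp0'
  · rw [omegaKL, if_pos hp0'.symm]; exact hB0
  · rw [omegaKL, if_neg (ne_of_gt hp0')]
    by_cases hpe : p ≤ Real.exp (-ε)
    · rw [if_pos hpe]
      have hplt1 : p < 1 :=
        lt_of_le_of_lt hpe (Real.exp_lt_one_iff.mpr (by linarith))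
      have hbdd : BddBelow {η : ℝ | η ∈ Set.Icc 0 (1 - p) ∧ klBer (p + η) p = ε} :=
        ⟨0, fun x hx => hx.1.1⟩
      set B := phi0 p ε * Real.sqrt (ε / 2) with hBdef
      rcases le_or_gt (1 - p) B with hc | hc
      · rcases Set.eq_empty_or_nonempty
            {η : ℝ | η ∈ Set.Icc 0 (1 - p) ∧ klBer (p + η) p = ε} with he | ⟨η0, hη0⟩
        · rw [he, Real.sInf_empty]; exact hB0
        · exact csInf_le_of_le hbdd hη0 (le_trans hη0.1.2 hc)
      · -- case `B < 1 - p` : use the KL lower bound and the IVT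
        have hpB1 : p + B < 1 := by linarith
        have hV0 : 0 < (p + B/3) * (1 - (p + B/3)) :=
          mul_pos (by linarith) (by linarith)
        have hklB : ε ≤ klBer (p + B) p := by
          have h1 := klBer_ge p B hp0' hB0 hpB1
          have h2 := quad_root_ge ε p hε hp0 hp1
          rw [← hBdef] at h2
          have hstep : ε = 2*ε*((p + B/3) * (1 - (p + B/3)))
              * ((p + B/3) * (1 - (p + B/3)))⁻¹ / 2 := by
            rw [mul_assoc (2*ε), mul_inv_cancel₀ (ne_of_gt hV0)]
            ring
          have h3 := mul_le_mul_of_nonneg_right h2 (inv_nonneg.mpr hV0.le)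
          linarith [hstep, h3, h1]
        have hc1 : ContinuousOn (fun t : ℝ => (p+t)/p) (Set.Icc 0 B) :=
          (continuousOn_const.add continuousOn_id).div_const p
        have hc2 : ContinuousOn (fun t : ℝ => (1-(p+t))/(1-p)) (Set.Icc 0 B) :=
          (continuousOn_const.sub (continuousOn_const.add continuousOn_id)).div_const (1-p)
        have hcont : ContinuousOn (fun t : ℝ => klBer (p + t) p) (Set.Icc 0 B) := by
          unfold klBer
          apply ContinuousOn.add
          · refine (continuousOn_const.add continuousOn_id).mul (hc1.log ?_)
            intro x hx
            have : 0 < p + x := by have := hx.1; simp only [Set.mem_Icc] at hx; linarith [hx.1]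
            exact div_ne_zero (ne_of_gt this) (ne_of_gt hp0')
          · refine (continuousOn_const.sub (continuousOn_const.add continuousOn_id)).mul
              (hc2.log ?_)
            intro x hx
            simp only [Set.mem_Icc] at hx
            have : 0 < 1 - (p + x) := by linarith [hx.2]
            exact div_ne_zero (ne_of_gt this) (by linarith : (1:ℝ) - p ≠ 0)
        have h0 : (fun t : ℝ => klBer (p + t) p) 0 = 0 := by
          simp only [add_zero, klBer, div_self (ne_of_gt hp0'),
            div_self (show (1:ℝ)-p ≠ 0 from by linarith), Real.log_one, mul_zero]
        have hIV := intermediate_value_Icc hB0 hcont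
        have hmem : ε ∈ Set.Icc ((fun t : ℝ => klBer (p + t) p) 0)
            ((fun t : ℝ => klBer (p + t) p) B) := by
          constructor
          · rw [h0]; exact hε.le
          · exact hklB
        obtain ⟨η, hηmem, hηval⟩ := hIV hmem
        refine csInf_le_of_le hbdd ?_ hηmem.2
        exact ⟨⟨hηmem.1, by linarith [hηmem.2]⟩, hηval⟩
    · rw [if_neg hpe]
      push_neg at hpe
      rcases eq_or_lt_of_le hp1 with h1 | h1
      · rw [show (1:ℝ) - p = 0 from by rw [h1]; ring]
        exact hB0
      · have hlog : -Real.log p < ε := by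
          have := (Real.lt_log_iff_exp_lt hp0').mpr hpe
          linarith
        have hld := neg_log_ge p hp0' hp1
        have h12 : (0:ℝ) < 1 + 2*p := by linarith
        have h9 : 9*(1-p) < 4*ε*(1+2*p) := by
          have hh := mul_lt_mul_of_pos_right (lt_of_le_of_lt hld hlog) h12
          have hic : (1+2*p)⁻¹ * (1+2*p) = 1 := inv_mul_cancel₀ (ne_of_gt h12)
          nlinarith [hh, hic]
        apply quad_root_le ε p (1-p) hε hp0 hp1 (by linarith)
        nlinarith [mul_le_mul_of_nonneg_left h9.le (by linarith : (0:ℝ) ≤ 1-p)]
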